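/- Let n ≥ 5 and 3 ≤ i ≤ n - 2. Then there exists X ∈ Sym₀(P_n) and λ ∈ ℝ such that the matrix obtained from X - λI by deleting row i has rank < n - 1; i.e., (X, e_i) fails to be controllable for some X ∈ Sym₀(P_n). -/

import Mathlib

private lemma sum_if_val {n : ℕ} (t : ℕ) (f : Fin n → ℝ) :
    ∑ c : Fin n, (if c.1 = t then f c else 0) = if h : t < n then f ⟨t, h⟩ else 0 := by
  split_ifs with h
  · rw [Finset.sum_eq_single ⟨t, h⟩]
    · simp
    · intro c _ hc
      exact if_neg fun hct => hc (Fin.ext hct)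
    · simp
  · refine Finset.sum_eq_zero fun c _ => ?_
    have := c.2
    exact if_neg (by omega)

private lemma sum_three {n : ℕ} (a : Fin n) (f : Fin n → ℝ)
    (hf : ∀ c : Fin n, c.1 + 1 ≠ a.1 → c.1 ≠ a.1 → c.1 ≠ a.1 + 1 → f c = 0) :
    ∑ c, f c = (if h : 1 ≤ a.1 then f ⟨a.1 - 1, by omega⟩ else 0) + f a
      + (if h : a.1 + 1 < n then f ⟨a.1 + 1, h⟩ else 0) := by
  have hsplit : ∀ c : Fin n, f c =
      (if c.1 + 1 = a.1 then f c else 0) + (if c.1 = a.1 then f c else 0)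
        + (if c.1 = a.1 + 1 then f c else 0) := by
    intro c
    split_ifs <;> first | omega | (rw [hf c ‹_› ‹_› ‹_›]; ring) | ring
  rw [Finset.sum_congr rfl (fun c _ => hsplit c), Finset.sum_add_distrib,
    Finset.sum_add_distrib, sum_if_val (a.1+1) f, sum_if_val a.1 f, dif_pos a.2]
  by_cases h1 : 1 ≤ a.1
  · rw [dif_pos h1]
    have he : ∀ c : Fin n, (if c.1 + 1 = a.1 then f c else 0)
        = (if c.1 = a.1 - 1 then f c else 0) := by
      intro c
      simp only [show (c.1 + 1 = a.1) ↔ (c.1 = a.1 - 1) from by omega]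
    rw [Finset.sum_congr rfl fun c _ => he c, sum_if_val,
      dif_pos (show a.1 - 1 < n by omega)]
    try simp
  · rw [dif_neg h1]
    have he : ∀ c : Fin n, (if c.1 + 1 = a.1 then f c else 0) = 0 :=
      fun c => if_neg (by omega)
    rw [Finset.sum_congr rfl fun c _ => he c, Finset.sum_const_zero]
    try simp

private lemma sqrt_key {m : ℝ} (hm : 2 ≤ m) :
    Real.sqrt (2*m/(m-1)) * Real.sqrt (m*(m-1)/2) = m ∧
    Real.sqrt (2*m/(m-1)) * (m-1) = 2 * Real.sqrt (m*(m-1)/2) ∧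
    0 < Real.sqrt (2*m/(m-1)) := by
  have h1 : (0:ℝ) < m - 1 := by linarith
  have hm0 : (0:ℝ) < m := by linarith
  have h2 : (0:ℝ) < 2*m/(m-1) := by positivity
  refine ⟨?_, ?_, Real.sqrt_pos.mpr h2⟩
  · rw [← Real.sqrt_mul h2.le, show 2*m/(m-1) * (m*(m-1)/2) = m^2 by field_simp,
      Real.sqrt_sq hm0.le]
  · have e1 : Real.sqrt (2*m/(m-1)) * (m-1)
        = Real.sqrt (2*m/(m-1) * (m-1)^2) := by
      rw [Real.sqrt_mul h2.le, Real.sqrt_sq h1.le]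
    have e2 : (2:ℝ) * Real.sqrt (m*(m-1)/2) = Real.sqrt (4 * (m*(m-1)/2)) := by
      rw [show (4:ℝ) = 2^2 by norm_num, Real.sqrt_mul (by positivity), Real.sqrt_sq (by norm_num)]
    rw [e1, e2]
    congr 1
    field_simp
    ring

private def Wf (i n : ℕ) (a1 a2 : ℝ) : ℕ → ℝ :=
  fun k => if k + 3 = i then a1 else if k + 2 = n then a2 else 1

private def Yf (i : ℕ) (sL : ℝ) : ℕ → ℝ :=
  fun k => if k + 2 = i then sL else if k + 2 < i then (k : ℝ) + 1 else 0

private def Zf (i n : ℕ) (sR : ℝ) : ℕ → ℝ :=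
  fun k => if k + 1 = n then sR else if i ≤ k then (k : ℝ) - (i : ℝ) + 1 else 0

private lemma rowY {n i : ℕ} (hn : 5 ≤ n) (hi1 : 3 ≤ i) (hin : i + 2 ≤ n)
    {a1 a2 sL : ℝ}
    (hK1 : a1 * sL = (i : ℝ) - 1) (hK2 : a1 * ((i : ℝ) - 2) = 2 * sL)
    (t : ℕ) (htn : t < n) (hti : t ≠ i - 1) :
    (if 1 ≤ t then Wf i n a1 a2 (t - 1) * Yf i sL (t - 1) else 0) - 2 * Yf i sL t
      + (if t + 1 < n then Wf i n a1 a2 t * Yf i sL (t + 1) else 0) = 0 := by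
  unfold Wf Yf
  rcases t with _ | s <;>
    [skip; simp only [Nat.add_sub_cancel]] <;>
    split_ifs <;> (try subst_vars) <;> (try (exfalso; omega)) <;>
    (try (push_cast; ring)) <;>
    ((try push_cast at hK1); (try push_cast at hK2); (try push_cast);
     (try ring_nf at hK1); (try ring_nf at hK2); (try ring_nf);
     all_goals linarith [hK1, hK2])

private lemma rowZ {n i : ℕ} (hn : 5 ≤ n) (hi1 : 3 ≤ i) (hin : i + 2 ≤ n)
    {a1 a2 sR : ℝ}
    (hK3 : a2 * sR = (n : ℝ) - (i : ℝ)) (hK4 : a2 * ((n : ℝ) - (i:ℝ) - 1) = 2 * sR)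
    (t : ℕ) (htn : t < n) (hti : t ≠ i - 1) :
    (if 1 ≤ t then Wf i n a1 a2 (t - 1) * Zf i n sR (t - 1) else 0) - 2 * Zf i n sR t
      + (if t + 1 < n then Wf i n a1 a2 t * Zf i n sR (t + 1) else 0) = 0 := by
  unfold Wf Zf
  rcases t with _ | s
  · split_ifs <;> (try subst_vars) <;> (try (exfalso; omega)) <;>
      (try (push_cast; ring)) <;>
      ((try push_cast at hK3); (try push_cast at hK4); (try push_cast);
       (try ring_nf at hK3); (try ring_nf at hK4); (try ring_nf);
       all_goals linarith [hK3, hK4])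
  · simp only [Nat.add_sub_cancel]
    split_ifs <;> (try subst_vars) <;> (try (exfalso; omega)) <;>
      (try (push_cast; ring)) <;>
      ((try push_cast at hK3); (try push_cast at hK4); (try push_cast);
       (try ring_nf at hK3); (try ring_nf at hK4); (try ring_nf);
       all_goals
         first
         | linarith [hK3, hK4]
         | (have hieqR : (i:ℝ) = (s:ℝ) + 1 := by
              have h' : i = s + 1 := by omega
              subst h'; push_cast; ring
            linarith [hK3, hK4, hieqR]))

private lemma rank_lt_aux {n : ℕ} (hn : 5 ≤ n) (M : Matrix (Fin (n-1)) (Fin n) ℝ)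
    (y z : Fin n → ℝ) (hy : M.mulVec y = 0) (hz : M.mulVec z = 0)
    (hind : LinearIndependent ℝ ![y, z]) : M.rank < n - 1 := by
  have hyk : y ∈ LinearMap.ker M.mulVecLin := by
    simp [LinearMap.mem_ker, Matrix.mulVecLin_apply, hy]
  have hzk : z ∈ LinearMap.ker M.mulVecLin := by
    simp [LinearMap.mem_ker, Matrix.mulVecLin_apply, hz]
  have hspan : Submodule.span ℝ (Set.range ![y, z]) ≤ LinearMap.ker M.mulVecLin := by
    rw [Submodule.span_le]
    rintro v ⟨j, rfl⟩
    fin_cases j <;> simpa using (by assumption)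
  have h2 : 2 ≤ Module.finrank ℝ (LinearMap.ker M.mulVecLin) := by
    have := finrank_span_eq_card hind
    simp only [Fintype.card_fin] at this
    calc (2:ℕ) = Module.finrank ℝ (Submodule.span ℝ (Set.range ![y, z])) := this.symm
    _ ≤ Module.finrank ℝ (LinearMap.ker M.mulVecLin) := Submodule.finrank_mono hspan
  have h3 : M.rank + Module.finrank ℝ (LinearMap.ker M.mulVecLin) = n := by
    rw [Matrix.rank]
    rw [LinearMap.finrank_range_add_finrank_ker M.mulVecLin, Module.finrank_fin_fun]
  omega

theorem stmt15 (n : ℕ) (hn : 5 ≤ n) (i : ℕ) (hi1 : 3 ≤ i) (hi2 : i ≤ n - 2) :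
    ∃ X : Matrix (Fin n) (Fin n) ℝ,
      X.IsSymm ∧
      (∀ a b : Fin n, (a.1 + 1 = b.1 ∨ b.1 + 1 = a.1) → X a b ≠ 0) ∧
      (∀ a b : Fin n, ¬(a.1 + 1 = b.1 ∨ b.1 + 1 = a.1) → X a b = 0) ∧
      ∃ lam : ℝ,
        (Matrix.of fun (r : Fin (n - 1)) (c : Fin n) =>
          (X - lam • 1) ⟨if r.1 < i - 1 then r.1 else r.1 + 1, by
            have := r.2; split <;> omega⟩ c).rank < n - 1 := by
  have hin : i + 2 ≤ n := by omega
  have hiR : (3:ℝ) ≤ (i:ℝ) := by exact_mod_cast hi1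
  have hinR : (i:ℝ) + 2 ≤ (n:ℝ) := by exact_mod_cast hin
  obtain ⟨a1, sL, hK1, hK2, ha1⟩ :
      ∃ a1 sL : ℝ, a1 * sL = (i:ℝ) - 1 ∧ a1 * ((i:ℝ) - 2) = 2 * sL ∧ 0 < a1 := by
    obtain ⟨h1, h2, h3⟩ := sqrt_key (m := (i:ℝ) - 1) (by linarith)
    refine ⟨_, _, h1, ?_, h3⟩
    calc _ = Real.sqrt (2 * ((i:ℝ)-1) / ((i:ℝ)-1-1)) * ((i:ℝ)-1-1) := by ring
    _ = _ := h2
  obtain ⟨a2, sR, hK3, hK4, ha2⟩ :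
      ∃ a2 sR : ℝ, a2 * sR = (n:ℝ) - (i:ℝ) ∧ a2 * ((n:ℝ) - (i:ℝ) - 1) = 2 * sR ∧ 0 < a2 :=
    ⟨_, _, (sqrt_key (m := (n:ℝ) - (i:ℝ)) (by linarith)).1,
      (sqrt_key (m := (n:ℝ) - (i:ℝ)) (by linarith)).2.1,
      (sqrt_key (m := (n:ℝ) - (i:ℝ)) (by linarith)).2.2⟩
  have hW : ∀ k, Wf i n a1 a2 k ≠ 0 := by
    intro k; unfold Wf; split_ifs
    exacts [ha1.ne', ha2.ne', one_ne_zero]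
  set X : Matrix (Fin n) (Fin n) ℝ := Matrix.of (fun a b : Fin n =>
    if a.1 + 1 = b.1 then Wf i n a1 a2 a.1
    else if b.1 + 1 = a.1 then Wf i n a1 a2 b.1 else 0) with hXdef
  have hXapp : ∀ a b : Fin n, X a b =
      (if a.1 + 1 = b.1 then Wf i n a1 a2 a.1
        else if b.1 + 1 = a.1 then Wf i n a1 a2 b.1 else 0) := fun a b => rfl
  refine ⟨X, ?_, ?_, ?_, 2, ?_⟩
  · -- symmetric
    show X.transpose = X
    ext a b
    rw [Matrix.transpose_apply, hXapp, hXapp]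
    split_ifs <;> first | rfl | omega
  · -- edges nonzero
    intro a b hab
    rw [hXapp]
    rcases hab with h | h
    · rw [if_pos h]; exact hW _
    · rw [if_neg (show ¬(a.1 + 1 = b.1) by omega), if_pos h]; exact hW _
  · -- non-edges zero
    intro a b hab
    push_neg at hab
    rw [hXapp, if_neg hab.1, if_neg hab.2]
  · -- rank
    have hEntry : ∀ a c : Fin n, (X - (2:ℝ) • 1) a c =
        (if a.1 + 1 = c.1 then Wf i n a1 a2 a.1
          else if c.1 + 1 = a.1 then Wf i n a1 a2 c.1 else 0)
        - (if a.1 = c.1 then 2 else 0) := by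
      intro a c
      rw [Matrix.sub_apply, Matrix.smul_apply, Matrix.one_apply, hXapp]
      simp [Fin.ext_iff, mul_ite]
    have hrowsum : ∀ (V : ℕ → ℝ) (a : Fin n),
        (∑ c, (X - (2:ℝ) • 1) a c * V c.1)
          = (if 1 ≤ a.1 then Wf i n a1 a2 (a.1 - 1) * V (a.1 - 1) else 0) - 2 * V a.1
            + (if a.1 + 1 < n then Wf i n a1 a2 a.1 * V (a.1 + 1) else 0) := by
      intro V a
      rw [sum_three a (fun c => (X - (2:ℝ) • 1) a c * V c.1) (by
        intro c h1 h2 h3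
        show (X - (2:ℝ) • 1) a c * V c.1 = 0
        rw [hEntry, if_neg (by omega), if_neg (by omega), if_neg (by omega)]
        ring)]
      simp only [hEntry]
      split_ifs <;> first | (exfalso; omega) | (push_cast; ring) | ring
    set y : Fin n → ℝ := fun j => Yf i sL j.1 with hydef
    set z : Fin n → ℝ := fun j => Zf i n sR j.1 with hzdef
    apply rank_lt_aux hn _ y z
    · funext r
      have hne : (if r.1 < i - 1 then r.1 else r.1 + 1) ≠ i - 1 := by
        have := r.2; split <;> omega
      show (∑ c, (X - (2:ℝ) • 1) ⟨if r.1 < i - 1 then r.1 else r.1 + 1, by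
          have := r.2; split <;> omega⟩ c * y c) = 0
      refine (hrowsum (Yf i sL) _).trans ?_
      exact rowY hn hi1 hin hK1 hK2 _ (by have := r.2; split <;> omega) hne
    · funext r
      have hne : (if r.1 < i - 1 then r.1 else r.1 + 1) ≠ i - 1 := by
        have := r.2; split <;> omega
      show (∑ c, (X - (2:ℝ) • 1) ⟨if r.1 < i - 1 then r.1 else r.1 + 1, by
          have := r.2; split <;> omega⟩ c * z c) = 0
      refine (hrowsum (Zf i n sR) _).trans ?_
      exact rowZ hn hi1 hin hK3 hK4 _ (by have := r.2; split <;> omega) hne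
    · -- linear independence
      have hY0 : Yf i sL 0 = 1 := by
        unfold Yf; split_ifs <;> first | (exfalso; omega) | norm_num
      have hZ0 : Zf i n sR 0 = 0 := by
        unfold Zf; split_ifs <;> first | (exfalso; omega) | rfl
      have hYi : Yf i sL i = 0 := by
        unfold Yf; split_ifs <;> first | (exfalso; omega) | rfl
      have hZi : Zf i n sR i = 1 := by
        unfold Zf; split_ifs <;> first | (exfalso; omega) | ring
      rw [LinearIndependent.pair_iff]
      intro s t hst
      have h0 := congrFun hst ⟨0, by omega⟩
      have h1 := congrFun hst ⟨i, by omega⟩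
      simp only [hydef, hzdef, Pi.add_apply, Pi.smul_apply, smul_eq_mul,
        Pi.zero_apply] at h0 h1
      rw [hY0, hZ0] at h0
      rw [hYi, hZi] at h1
      constructor <;> linarith
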